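/- arXiv:1302.2528 — 3 statements merged into one kernel-verified Lean document; each statement's English description precedes it below -/
import Mathlib

section
/- Let d_0 > d_1 > ... > d_n be a sequence of positive integers with d_n = 1 and d_i dividing d_{i-1} for each i, and let Λ_0, Λ_1, ..., Λ_n be positive integers with d_i = gcd(Λ_0, ..., Λ_i) for each i (where d_0 = Λ_0), such that for each k ≥ 1, Λ_k / d_k lies in the semigroup generated by Λ_0/d_{k-1}, ..., Λ_{k-1}/d_{k-1}. Then the conductor of the numerical semigroup S generated by Λ_0, ..., Λ_n equals ∑_{k=1}^{n} (d_{k-1}/d_k - 1) Λ_k - Λ_0 + 1. -/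
lemma mem_glue (G : Set ℕ) (e a x : ℕ) :
    x ∈ AddSubmonoid.closure ((fun t => e * t) '' G ∪ {a}) ↔
      ∃ t ∈ AddSubmonoid.closure G, ∃ m : ℕ, x = e * t + m * a := by
  rw [AddSubmonoid.closure_union, AddSubmonoid.mem_sup]
  constructor
  · rintro ⟨y, hy, z, hz, rfl⟩
    rw [show ((fun t => e * t) '' G) = ⇑(AddMonoidHom.mulLeft e) '' G from rfl,
      ← AddMonoidHom.map_mclosure] at hy
    obtain ⟨t, ht, rfl⟩ := hy
    obtain ⟨m, rfl⟩ := AddSubmonoid.mem_closure_singleton.mp hz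
    exact ⟨t, ht, m, by simp [AddMonoidHom.mulLeft, smul_eq_mul]⟩
  · rintro ⟨t, ht, m, rfl⟩
    refine ⟨e * t, ?_, m * a,
      AddSubmonoid.mem_closure_singleton.mpr ⟨m, by simp [smul_eq_mul]⟩, rfl⟩
    rw [show ((fun t => e * t) '' G) = ⇑(AddMonoidHom.mulLeft e) '' G from rfl,
      ← AddMonoidHom.map_mclosure]
    exact ⟨t, ht, rfl⟩

set_option maxHeartbeats 1000000 in
lemma glue (T : AddSubmonoid ℕ) (c e a : ℕ) (he : 0 < e) (ha : 0 < a)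
    (haT : a ∈ T) (hcop : Nat.Coprime e a)
    (hc : IsLeast {c' : ℕ | ∀ x : ℕ, c' ≤ x → x ∈ T} c) :
    IsLeast {c' : ℕ | ∀ x : ℕ, c' ≤ x → ∃ t ∈ T, ∃ m : ℕ, x = e * t + m * a}
      (e * c + (e - 1) * (a - 1)) := by
  obtain ⟨hc1, hc2⟩ := hc
  have he' : (e : ℤ) ≠ 0 := by exact_mod_cast he.ne'
  have hcastE : ((e - 1 : ℕ) : ℤ) = (e : ℤ) - 1 := by omega
  have hcastA : ((a - 1 : ℕ) : ℤ) = (a : ℤ) - 1 := by omega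
  have ha1 : (1 : ℤ) ≤ a := by exact_mod_cast ha
  have he1 : (1 : ℤ) ≤ e := by exact_mod_cast he
  constructor
  · intro x hx
    obtain ⟨u, v, huv⟩ := Nat.isCoprime_iff_coprime.mpr hcop
    set m : ℤ := (x * v) % e with hm
    have hm0 : 0 ≤ m := Int.emod_nonneg _ he'
    have hmlt : m < e := Int.emod_lt_of_pos _ (by exact_mod_cast he)
    have hdm : (e : ℤ) ∣ x * v - m := ⟨x * v / e, by
      have := Int.mul_ediv_add_emod (x * v) e; linarith⟩
    have hkey : (x : ℤ) - m * a = (x * u) * e + (x * v - m) * a := by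
      linear_combination -(x : ℤ) * huv
    have hdvd : (e : ℤ) ∣ (x : ℤ) - m * a := by
      rw [hkey]; exact dvd_add ⟨x * u, mul_comm _ _⟩ (Dvd.dvd.mul_right hdm a)
    have hxZ : ((e * c + (e - 1) * (a - 1) : ℕ) : ℤ) ≤ x := by exact_mod_cast hx
    have hxZ' : (e : ℤ) * c + ((e : ℤ) - 1) * ((a : ℤ) - 1) ≤ x := by
      push_cast [hcastE, hcastA] at hxZ; linarith
    have hc0 : (0 : ℤ) ≤ (c:ℤ) := Int.natCast_nonneg c
    have hma : m * a ≤ (x : ℤ) := by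
      by_contra hlt
      push_neg at hlt
      have h1 : (e : ℤ) ≤ m * a - x := Int.le_of_dvd (by linarith) (by
        obtain ⟨w, hw⟩ := hdvd; exact ⟨-w, by linarith⟩)
      have h2 : m * a ≤ ((e : ℤ) - 1) * a := by
        have := mul_le_mul_of_nonneg_right (by linarith : m ≤ (e : ℤ) - 1)
          (Int.natCast_nonneg a)
        linarith
      nlinarith
    obtain ⟨q, hq⟩ := hdvd
    have hq0 : 0 ≤ q := by nlinarith
    have hqc : (c : ℤ) ≤ q := by
      by_contra hlt
      push_neg at hlt
      have h3 : q ≤ (c : ℤ) - 1 := by omega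
      have h4 := mul_le_mul_of_nonneg_left h3 (by linarith : (0:ℤ) ≤ (e:ℤ))
      nlinarith [mul_le_mul_of_nonneg_right (by linarith : m ≤ (e:ℤ) - 1)
        (Int.natCast_nonneg a)]
    refine ⟨q.toNat, hc1 q.toNat (by omega), m.toNat, ?_⟩
    have : (x : ℤ) = e * q.toNat + m.toNat * a := by
      rw [Int.toNat_of_nonneg hq0, Int.toNat_of_nonneg hm0]; linarith
    exact_mod_cast this
  · intro c' hc'
    by_contra hlt
    push_neg at hlt
    obtain ⟨t, ht, mm, hx⟩ := hc' (e * c + (e - 1) * (a - 1) - 1) (by omega)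
    have hxZ : (e : ℤ) * c + ((e : ℤ) - 1) * ((a : ℤ) - 1) - 1 = e * t + mm * a := by
      have h2 : ((e * c + (e - 1) * (a - 1) : ℕ) : ℤ)
          = (e : ℤ) * c + ((e : ℤ) - 1) * ((a : ℤ) - 1) := by push_cast [hcastE, hcastA]; ring
      have h1 : ((e * c + (e - 1) * (a - 1) - 1 : ℕ) : ℤ)
          = (e : ℤ) * c + ((e : ℤ) - 1) * ((a : ℤ) - 1) - 1 := by omega
      rw [← h1]; exact_mod_cast hx
    have hdvd : (e : ℤ) ∣ ((mm : ℤ) + 1) * a := ⟨(c : ℤ) + a - 1 - t, by linarith⟩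
    have hdm : (e : ℤ) ∣ (mm : ℤ) + 1 :=
      (Nat.isCoprime_iff_coprime.mpr hcop).dvd_of_dvd_mul_right hdvd
    obtain ⟨q, hq⟩ := hdm
    have hq1 : 1 ≤ q := by
      rcases le_or_gt 1 q with h | h
      · exact h
      · exfalso
        have h5 : q ≤ 0 := by omega
        have h6 : (e:ℤ) * q ≤ 0 := mul_nonpos_of_nonneg_of_nonpos (by linarith) h5
        have h7 : (0:ℤ) ≤ (mm:ℤ) := Int.natCast_nonneg mm
        linarith [hq]
    have hcancel : (c : ℤ) - 1 = t + (q - 1) * a := by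
      have h3 : (e : ℤ) * ((c : ℤ) - 1) = e * ((t : ℤ) + (q - 1) * a) := by
        linear_combination hxZ + (a : ℤ) * hq
      exact mul_left_cancel₀ he' h3
    have hc1' : 1 ≤ c := by
      have h0 : (0:ℤ) ≤ (t : ℤ) + (q - 1) * a :=
        add_nonneg (Int.natCast_nonneg t) (mul_nonneg (by linarith) (Int.natCast_nonneg a))
      have : (1:ℤ) ≤ c := by linarith
      exact_mod_cast this
    have hmem : c - 1 ∈ T := by
      have hnat : c - 1 = t + (q - 1).toNat * a := by
        have : ((c - 1 : ℕ) : ℤ) = (t : ℤ) + ((q - 1).toNat : ℤ) * a := by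
          rw [Int.toNat_of_nonneg (by omega : (0:ℤ) ≤ q - 1)]; omega
        exact_mod_cast this
      rw [hnat]
      exact T.add_mem ht (by simpa [smul_eq_mul] using T.nsmul_mem haT (q - 1).toNat)
    have : c ≤ c - 1 := hc2 (fun x hx => by
      rcases Nat.lt_or_ge x c with h | h
      · have hxeq : x = c - 1 := by omega
        rwa [hxeq]
      · exact hc1 x h)
    omega

set_option maxHeartbeats 1000000 in
/-- Brauer's conductor formula for telescopic numerical semigroups:
the conductor of `⟨Λ_0, …, Λ_n⟩` equals `∑_{k=1}^n (d_{k-1}/d_k - 1) Λ_k - Λ_0 + 1`. -/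
theorem stmt_2 (n : ℕ) (hn : 1 ≤ n) (Λ : ℕ → ℕ)
    (hpos : ∀ i, i ≤ n → 0 < Λ i)
    (d : ℕ → ℕ)
    (hd : ∀ i, i ≤ n → d i = (Finset.range (i + 1)).gcd Λ)
    (hdec : ∀ i, 1 ≤ i → i ≤ n → d i < d (i - 1))
    (hdn : d n = 1)
    (htel : ∀ k, 1 ≤ k → k ≤ n →
      Λ k / d k ∈ AddSubmonoid.closure {x : ℕ | ∃ j < k, x = Λ j / d (k - 1)})
    (S : AddSubmonoid ℕ)
    (hS : S = AddSubmonoid.closure {x : ℕ | ∃ i ≤ n, x = Λ i}) :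
    ∃ c : ℕ, IsLeast {c' : ℕ | ∀ x : ℕ, c' ≤ x → x ∈ S} c ∧
      (c : ℤ) = (∑ k ∈ Finset.Icc 1 n, ((d (k - 1) / d k : ℕ) - 1 : ℤ) * (Λ k : ℤ))
        - (Λ 0 : ℤ) + 1 := by
  have hdvdΛ : ∀ i, i ≤ n → ∀ j, j ≤ i → d i ∣ Λ j := by
    intro i hi j hj
    rw [hd i hi]
    exact Finset.gcd_dvd (by simp [Nat.lt_succ_iff, hj])
  have dpos : ∀ i, i ≤ n → 0 < d i := by
    intro i hi
    rcases Nat.eq_zero_or_pos (d i) with h | h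
    · have h2 := hdvdΛ i hi 0 (Nat.zero_le _)
      rw [h, zero_dvd_iff] at h2
      have := hpos 0 (Nat.zero_le _)
      omega
    · exact h
  have hsucc : ∀ k, k + 1 ≤ n → d (k + 1) = Nat.gcd (Λ (k + 1)) (d k) := by
    intro k hk
    rw [hd (k + 1) hk, hd k (by omega), Finset.range_add_one, Finset.gcd_insert]
    rfl
  have key : ∀ k, k ≤ n → ∃ c : ℕ,
      IsLeast {c' : ℕ | ∀ x : ℕ, c' ≤ x →
        x ∈ AddSubmonoid.closure {x : ℕ | ∃ j ≤ k, x = Λ j / d k}} c ∧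
      (c : ℤ) = (∑ j ∈ Finset.Icc 1 k, ((d (j - 1) / d j : ℕ) - 1 : ℤ) * ((Λ j / d k : ℕ) : ℤ))
        - ((Λ 0 / d k : ℕ) : ℤ) + 1 := by
    intro k
    induction k with
    | zero =>
      intro _
      have hd0 : d 0 = Λ 0 := by rw [hd 0 (by omega)]; simp
      have hset : {x : ℕ | ∃ j ≤ 0, x = Λ j / d 0} = {1} := by
        ext y
        simp [Nat.le_zero, hd0, Nat.div_self (hpos 0 (Nat.zero_le _))]
      refine ⟨0, ⟨?_, fun c' _ => Nat.zero_le _⟩, ?_⟩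
      · intro x _
        rw [hset, AddSubmonoid.mem_closure_singleton]
        exact ⟨x, by simp⟩
      · simp [hd0, Nat.div_self (hpos 0 (Nat.zero_le _)), Finset.Icc_eq_empty_of_lt]
    | succ k ih =>
      intro hk
      obtain ⟨c, hc, hval⟩ := ih (by omega)
      have hdk1 : 0 < d (k + 1) := dpos (k + 1) hk
      have hdk : 0 < d k := dpos k (by omega)
      have hdd : d (k + 1) ∣ d k := by rw [hsucc k hk]; exact Nat.gcd_dvd_right _ _
      set e := d k / d (k + 1) with hedef
      set a := Λ (k + 1) / d (k + 1) with hadef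
      have he : 0 < e := Nat.div_pos (Nat.le_of_dvd hdk hdd) hdk1
      have ha : 0 < a :=
        Nat.div_pos (Nat.le_of_dvd (hpos (k + 1) hk) (hdvdΛ (k + 1) hk (k + 1) le_rfl)) hdk1
      have hmul : d k = e * d (k + 1) := by
        rw [hedef, Nat.div_mul_cancel hdd]
      have hcop : Nat.Coprime e a := by
        have hg : Nat.gcd (d k) (Λ (k + 1)) = d (k + 1) := by
          rw [Nat.gcd_comm]; exact (hsucc k hk).symm
        have h2 := Nat.coprime_div_gcd_div_gcd (m := d k) (n := Λ (k + 1))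
          (by rw [hg]; exact hdk1)
        rwa [hg] at h2
      have hscale : ∀ j, j ≤ k → Λ j / d (k + 1) = e * (Λ j / d k) := by
        intro j hj
        obtain ⟨w, hw⟩ := hdvdΛ k (by omega) j hj
        have hL : Λ j / d (k + 1) = e * w := by
          rw [hw, hmul, mul_right_comm, Nat.mul_div_cancel _ hdk1]
        have hR : Λ j / d k = w := by
          rw [hw, Nat.mul_div_cancel_left _ hdk]
        rw [hL, hR]
      have haT : a ∈ AddSubmonoid.closure {x : ℕ | ∃ j ≤ k, x = Λ j / d k} := by
        have h2 := htel (k + 1) (by omega) hk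
        simp only [Nat.add_sub_cancel] at h2
        convert h2 using 3
        ext y
        simp [Nat.lt_succ_iff]
      have hgens : {x : ℕ | ∃ j ≤ k + 1, x = Λ j / d (k + 1)}
          = (fun t => e * t) '' {x : ℕ | ∃ j ≤ k, x = Λ j / d k} ∪ {a} := by
        ext y
        constructor
        · rintro ⟨j, hj, rfl⟩
          rcases Nat.lt_or_ge j (k + 1) with h | h
          · left
            exact ⟨Λ j / d k, ⟨j, by omega, rfl⟩, (hscale j (by omega)).symm⟩
          · right
            have hjeq : j = k + 1 := by omega
            rw [hjeq]; rfl
        · rintro (⟨z, ⟨j, hj, rfl⟩, rfl⟩ | h)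
          · exact ⟨j, by omega, (hscale j hj).symm⟩
          · exact ⟨k + 1, le_rfl, h⟩
      refine ⟨e * c + (e - 1) * (a - 1), ?_, ?_⟩
      · rw [show {x : ℕ | ∃ j ≤ k + 1, x = Λ j / d (k + 1)}
            = (fun t => e * t) '' {x : ℕ | ∃ j ≤ k, x = Λ j / d k} ∪ {a} from hgens]
        have heq : {c' : ℕ | ∀ x : ℕ, c' ≤ x → x ∈ AddSubmonoid.closure
              ((fun t => e * t) '' {x : ℕ | ∃ j ≤ k, x = Λ j / d k} ∪ {a})}
            = {c' : ℕ | ∀ x : ℕ, c' ≤ x →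
              ∃ t ∈ AddSubmonoid.closure {x : ℕ | ∃ j ≤ k, x = Λ j / d k},
                ∃ m : ℕ, x = e * t + m * a} := by
          ext c'
          simp only [Set.mem_setOf_eq, mem_glue]
        rw [heq]
        exact glue _ c e a he ha haT hcop hc
      · have hcastE : ((e - 1 : ℕ) : ℤ) = (e : ℤ) - 1 := by omega
        have hcastA : ((a - 1 : ℕ) : ℤ) = (a : ℤ) - 1 := by omega
        rw [Finset.sum_Icc_succ_top (by omega : 1 ≤ k + 1)]
        simp only [Nat.add_sub_cancel]
        have hsum : ∑ j ∈ Finset.Icc 1 k,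
            ((d (j - 1) / d j : ℕ) - 1 : ℤ) * ((Λ j / d (k + 1) : ℕ) : ℤ)
            = (e : ℤ) * ∑ j ∈ Finset.Icc 1 k,
              ((d (j - 1) / d j : ℕ) - 1 : ℤ) * ((Λ j / d k : ℕ) : ℤ) := by
          rw [Finset.mul_sum]
          apply Finset.sum_congr rfl
          intro j hj
          rw [hscale j (Finset.mem_Icc.mp hj).2]
          push_cast
          ring
        rw [hsum, hscale 0 (Nat.zero_le _),
          show d k / d (k + 1) = e from rfl, show Λ (k + 1) / d (k + 1) = a from rfl]
        push_cast [hcastE, hcastA] at hval ⊢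
        linear_combination (e : ℤ) * hval
  obtain ⟨c, hc, hval⟩ := key n le_rfl
  refine ⟨c, ?_, ?_⟩
  · have hset : {x : ℕ | ∃ j ≤ n, x = Λ j / d n} = {x : ℕ | ∃ i ≤ n, x = Λ i} := by
      rw [hdn]; simp
    rw [hS, ← hset]
    exact hc
  · rw [hval, hdn]
    simp
end

section
/- Every telescopic numerical semigroup is symmetric: if S is generated by a telescopic sequence Λ_0, ..., Λ_n (meaning that with d_i = gcd(Λ_0,...,Λ_i), each Λ_k/d_k lies in the semigroup generated by Λ_0/d_{k-1}, ..., Λ_{k-1}/d_{k-1}, and d_n = 1), then for F the Frobenius number of S and all integers x, x ∈ S if and only if F - x ∉ S. -/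
open AddSubmonoid Finset

private lemma exists_decomp (m l : ℕ) (hm : 0 < m) (hco : IsCoprime (l:ℤ) (m:ℤ)) (x : ℤ) :
    ∃ q : ℤ, ∃ a : ℕ, a < m ∧ x = m * q + a * l := by
  obtain ⟨u, v, huv⟩ := hco
  have hm' : (0:ℤ) < m := by exact_mod_cast hm
  set a0 : ℤ := (x * u) % m with ha0
  have h0 : 0 ≤ a0 := Int.emod_nonneg _ (by positivity)
  have h1 : a0 < m := Int.emod_lt_of_pos _ hm'
  have e : a0 = x*u - m*((x*u)/m) := Int.emod_def _ _
  have hdvd : (m:ℤ) ∣ (x - a0 * l) :=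
    ⟨x*v + ((x*u)/m)*l, by rw [e]; linear_combination (-x) * huv⟩
  obtain ⟨q, hq⟩ := hdvd
  refine ⟨q, a0.toNat, by omega, ?_⟩
  have h2 : (a0.toNat : ℤ) = a0 := Int.toNat_of_nonneg h0
  rw [h2]; linarith

private lemma decomp_unique (m l : ℕ) (hco : IsCoprime (l:ℤ) (m:ℤ)) {q q' : ℤ} {a a' : ℕ}
    (ha : a < m) (ha' : a' < m) (h : (m:ℤ)*q + a*l = m*q' + a'*l) : a = a' ∧ q = q' := by
  have hdvd : (m:ℤ) ∣ ((a:ℤ) - a') * l := ⟨q' - q, by linear_combination h⟩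
  have hd2 : (m:ℤ) ∣ ((a:ℤ) - a') := hco.symm.dvd_of_dvd_mul_right hdvd
  have haa : (a:ℤ) - a' = 0 := Int.eq_zero_of_abs_lt_dvd hd2 (abs_lt.mpr ⟨by omega, by omega⟩)
  have haa' : a = a' := by omega
  subst haa'
  have h2 : (m:ℤ) * q = m * q' := by linarith
  have hm : (m:ℤ) ≠ 0 := by omega
  exact ⟨rfl, mul_left_cancel₀ hm h2⟩

private theorem key : ∀ (n : ℕ) (Λ : ℕ → ℕ),
    (∀ i, i ≤ n → 0 < Λ i) →
    (Finset.range (n+1)).gcd Λ = 1 →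
    (∀ k, 1 ≤ k → k ≤ n → Λ k / (Finset.range (k+1)).gcd Λ ∈
      AddSubmonoid.closure {x : ℕ | ∃ j < k, x = Λ j / (Finset.range k).gcd Λ}) →
    ∃ F : ℤ, ∀ x : ℤ,
      (0 ≤ x ∧ x.toNat ∈ AddSubmonoid.closure {x : ℕ | ∃ i ≤ n, x = Λ i}) ↔
      ¬(0 ≤ F - x ∧ (F - x).toNat ∈ AddSubmonoid.closure {x : ℕ | ∃ i ≤ n, x = Λ i}) := by
  intro n
  induction n with
  | zero =>
    intro Λ hpos hgcd _
    have h1 : Λ 0 = 1 := by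
      rw [Finset.range_one] at hgcd
      simpa using hgcd
    refine ⟨-1, ?_⟩
    have hmem : ∀ y : ℕ, y ∈ AddSubmonoid.closure {x : ℕ | ∃ i ≤ 0, x = Λ i} := by
      intro y
      have h0 : (1:ℕ) ∈ AddSubmonoid.closure {x : ℕ | ∃ i ≤ 0, x = Λ i} :=
        subset_closure ⟨0, le_rfl, h1.symm⟩
      have h2 := nsmul_mem h0 y
      simpa [smul_eq_mul] using h2
    intro x
    simp only [hmem, and_true]
    omega
  | succ n ih =>
    intro Λ hpos hgcd htel
    set m := (Finset.range (n+1)).gcd Λ with hm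
    set l := Λ (n+1) with hl
    set Sset := {x : ℕ | ∃ i ≤ n+1, x = Λ i} with hSset
    set S := AddSubmonoid.closure Sset with hS
    set Tset := {x : ℕ | ∃ i ≤ n, x = Λ i / m} with hTset
    set T := AddSubmonoid.closure Tset with hT
    have hdvd : ∀ j, j ≤ n → m ∣ Λ j := fun j hj =>
      Finset.gcd_dvd (Finset.mem_range.mpr (by omega))
    have hmpos : 0 < m := Nat.pos_of_dvd_of_pos (hdvd 0 (by omega)) (hpos 0 (by omega))
    -- coprimality of l and m
    have hgcd2 : Nat.gcd l m = 1 := by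
      have h2 : (Finset.range (n+2)).gcd Λ = Nat.gcd l m := by
        rw [Finset.range_add_one, Finset.gcd_insert]
        rfl
      rw [← h2]; exact hgcd
    have hcoZ : IsCoprime (l:ℤ) (m:ℤ) := by
      rw [Int.isCoprime_iff_gcd_eq_one, Int.gcd_natCast_natCast]
      exact hgcd2
    -- gcd scaling
    have hscale : ∀ K, K ≤ n+1 → (Finset.range K).gcd Λ
        = m * (Finset.range K).gcd (fun j => Λ j / m) := by
      intro K hK
      have h1 : (Finset.range K).gcd Λ
          = (Finset.range K).gcd (fun j => m * (Λ j / m)) := by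
        apply Finset.gcd_congr rfl
        intro j hj
        rw [Finset.mem_range] at hj
        exact (Nat.mul_div_cancel' (hdvd j (by omega))).symm
      rw [h1, Finset.gcd_mul_left]
      simp
    -- l ∈ T
    have hlT : l ∈ T := by
      have h1 := htel (n+1) (by omega) le_rfl
      rw [hgcd, Nat.div_one] at h1
      have h2 : {x : ℕ | ∃ j < n+1, x = Λ j / (Finset.range (n+1)).gcd Λ} = Tset := by
        ext x
        simp [hTset, Nat.lt_succ_iff, hm]
      rwa [h2] at h1
    -- multiples of m of T live in S
    have hmul : ∀ t, t ∈ T → m * t ∈ S := by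
      intro t ht
      induction ht using AddSubmonoid.closure_induction with
      | mem x hx =>
        obtain ⟨i, hi, hx⟩ := hx
        subst hx
        rw [Nat.mul_div_cancel' (hdvd i hi)]
        exact subset_closure ⟨i, by omega, rfl⟩
      | zero => simpa using zero_mem S
      | add x y hx hy hx' hy' =>
        rw [mul_add]; exact add_mem hx' hy'
    have hlS : l ∈ S := subset_closure ⟨n+1, le_rfl, rfl⟩
    -- reduction
    have hreduce : ∀ t, t ∈ T → ∀ c : ℕ, ∃ t', t' ∈ T ∧ ∃ a, a < m ∧
        m*t + c*l = m*t' + a*l := by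
      intro t ht c
      refine ⟨t + (c/m)*l, add_mem ht ?_, c % m, Nat.mod_lt _ hmpos, ?_⟩
      · have h3 := nsmul_mem hlT (c/m)
        simpa [smul_eq_mul] using h3
      · conv_lhs => rw [← Nat.div_add_mod c m]
        ring
    -- characterization of S
    have hchar : ∀ s : ℕ, s ∈ S ↔ ∃ t, t ∈ T ∧ ∃ a, a < m ∧ s = m*t + a*l := by
      intro s
      constructor
      · intro hs
        induction hs using AddSubmonoid.closure_induction with
        | mem x hx =>
          obtain ⟨i, hi, hx⟩ := hx
          subst hx
          rcases Nat.lt_or_ge i (n+1) with h | h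
          · refine ⟨Λ i / m, subset_closure ⟨i, by omega, rfl⟩, 0, hmpos, ?_⟩
            rw [Nat.mul_div_cancel' (hdvd i (by omega))]; ring
          · have hi' : i = n+1 := by omega
            subst hi'
            obtain ⟨t', ht', a, ha, he⟩ := hreduce 0 (zero_mem T) 1
            exact ⟨t', ht', a, ha, by simpa using he⟩
        | zero => exact ⟨0, zero_mem T, 0, hmpos, by ring⟩
        | add x y hx hy hx' hy' =>
          obtain ⟨t₁, ht₁, a₁, ha₁, he₁⟩ := hx'
          obtain ⟨t₂, ht₂, a₂, ha₂, he₂⟩ := hy'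
          obtain ⟨t', ht', a, ha, he⟩ := hreduce (t₁ + t₂) (add_mem ht₁ ht₂) (a₁ + a₂)
          exact ⟨t', ht', a, ha, by rw [he₁, he₂, ← he]; ring⟩
      · rintro ⟨t, ht, a, ha, rfl⟩
        refine add_mem (hmul t ht) ?_
        have h3 := nsmul_mem hlS a
        simpa [smul_eq_mul] using h3
    -- apply IH
    have pos' : ∀ i, i ≤ n → 0 < Λ i / m := fun i hi =>
      Nat.div_pos (Nat.le_of_dvd (hpos i (by omega)) (hdvd i hi)) hmpos
    have gcd1' : (Finset.range (n+1)).gcd (fun j => Λ j / m) = 1 := by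
      have h1 := hscale (n+1) le_rfl
      have h2 : m * 1 = m * (Finset.range (n+1)).gcd (fun j => Λ j / m) := by
        rw [mul_one]; exact h1
      exact (Nat.eq_of_mul_eq_mul_left hmpos h2).symm
    have tel' : ∀ k, 1 ≤ k → k ≤ n → (fun j => Λ j / m) k /
        (Finset.range (k+1)).gcd (fun j => Λ j / m) ∈
        AddSubmonoid.closure {x : ℕ | ∃ j < k, x = (fun j => Λ j / m) j /
          (Finset.range k).gcd (fun j => Λ j / m)} := by
      intro k hk1 hk2
      have e1 : (Λ k / m) / (Finset.range (k+1)).gcd (fun j => Λ j / m)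
          = Λ k / (Finset.range (k+1)).gcd Λ := by
        rw [Nat.div_div_eq_div_mul, ← hscale (k+1) (by omega)]
      have e2 : {x : ℕ | ∃ j < k, x = (Λ j / m) / (Finset.range k).gcd (fun j => Λ j / m)}
          = {x : ℕ | ∃ j < k, x = Λ j / (Finset.range k).gcd Λ} := by
        ext x
        constructor
        · rintro ⟨j, hj, rfl⟩
          exact ⟨j, hj, by rw [Nat.div_div_eq_div_mul, ← hscale k (by omega)]⟩
        · rintro ⟨j, hj, rfl⟩
          exact ⟨j, hj, by rw [Nat.div_div_eq_div_mul, ← hscale k (by omega)]⟩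
      simp only []
      rw [e1, e2]
      exact htel k hk1 (by omega)
    obtain ⟨FT, hTsym⟩ := ih (fun j => Λ j / m) pos' gcd1' tel'
    -- identify the IH closure with T
    have hTT : AddSubmonoid.closure {x : ℕ | ∃ i ≤ n, x = (fun j => Λ j / m) i} = T := rfl
    rw [hTT] at hTsym
    -- integer-level canonical decomposition
    have fwd : ∀ (q : ℤ) (a : ℕ), a < m → 0 ≤ q → q.toNat ∈ T →
        0 ≤ (m:ℤ)*q + a*l ∧ ((m:ℤ)*q + a*l).toNat ∈ S := by
      intro q a ha hq0 hqT
      have hx0 : (0:ℤ) ≤ (m:ℤ)*q + a*l := by positivity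
      have h2 : (m:ℤ)*q + a*l = ((m*q.toNat + a*l : ℕ) : ℤ) := by
        push_cast
        rw [Int.toNat_of_nonneg hq0]
      refine ⟨hx0, ?_⟩
      rw [h2, Int.toNat_natCast]
      exact (hchar _).mpr ⟨q.toNat, hqT, a, ha, rfl⟩
    have canon : ∀ x : ℤ, ∃ q : ℤ, ∃ a : ℕ, a < m ∧ x = m*q + a*l ∧
        ((0 ≤ x ∧ x.toNat ∈ S) ↔ (0 ≤ q ∧ q.toNat ∈ T)) := by
      intro x
      obtain ⟨q, a, ha, he⟩ := exists_decomp m l hmpos hcoZ x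
      refine ⟨q, a, ha, he, ?_, ?_⟩
      · rintro ⟨hx0, hxS⟩
        obtain ⟨t, ht, a', ha', he'⟩ := (hchar x.toNat).mp hxS
        have he'' : x = (m:ℤ)*t + a'*l := by
          have h3 := congrArg (fun y : ℕ => (y : ℤ)) he'
          simp only [Int.toNat_of_nonneg hx0] at h3
          push_cast at h3
          exact h3
        obtain ⟨haa, hqq⟩ := decomp_unique m l hcoZ ha ha' (he ▸ he'')
        refine ⟨by rw [hqq]; positivity, ?_⟩
        rw [hqq, Int.toNat_natCast]
        exact ht
      · rintro ⟨hq0, hqT⟩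
        rw [he]
        exact fwd q a ha hq0 hqT
    refine ⟨(m:ℤ)*FT + ((m:ℤ)-1)*l, ?_⟩
    intro x
    obtain ⟨q, a, ha, he, hiff⟩ := canon x
    set F := (m:ℤ)*FT + ((m:ℤ)-1)*l with hF
    have hb : F - x = (m:ℤ)*(FT - q) + ((m - 1 - a : ℕ) : ℤ)*l := by
      have hc : ((m - 1 - a : ℕ) : ℤ) = (m:ℤ) - 1 - a := by omega
      rw [hc, hF]
      linear_combination (-1 : ℤ) * he
    obtain ⟨q₂, a₂, ha₂, he₂, hiff₂⟩ := canon (F - x)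
    have hbm : m - 1 - a < m := by omega
    obtain ⟨haa, hqq⟩ := decomp_unique m l hcoZ hbm ha₂ (hb ▸ he₂)
    rw [hiff, hiff₂, ← hqq]
    exact hTsym q

/-- Every telescopic numerical semigroup is symmetric: for `F` the Frobenius number,
`x ∈ S ↔ F - x ∉ S` for all integers `x`. -/
theorem stmt_3 (n : ℕ) (hn : 1 ≤ n) (Λ : ℕ → ℕ)
    (hpos : ∀ i, i ≤ n → 0 < Λ i)
    (d : ℕ → ℕ)
    (hd : ∀ i, i ≤ n → d i = (Finset.range (i + 1)).gcd Λ)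
    (hdn : d n = 1)
    (htel : ∀ k, 1 ≤ k → k ≤ n →
      Λ k / d k ∈ AddSubmonoid.closure {x : ℕ | ∃ j < k, x = Λ j / d (k - 1)})
    (S : AddSubmonoid ℕ)
    (hS : S = AddSubmonoid.closure {x : ℕ | ∃ i ≤ n, x = Λ i})
    (F : ℤ)
    (hF : IsGreatest {x : ℤ | x < 0 ∨ x.toNat ∉ S} F) :
    ∀ x : ℤ, (0 ≤ x ∧ x.toNat ∈ S) ↔ ¬(0 ≤ F - x ∧ (F - x).toNat ∈ S) := by
  subst hS
  have hgcd1 : (Finset.range (n+1)).gcd Λ = 1 := by rw [← hd n le_rfl]; exact hdn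
  have htel' : ∀ k, 1 ≤ k → k ≤ n → Λ k / (Finset.range (k+1)).gcd Λ ∈
      AddSubmonoid.closure {x : ℕ | ∃ j < k, x = Λ j / (Finset.range k).gcd Λ} := by
    intro k hk1 hk2
    have h1 := htel k hk1 hk2
    rw [hd k hk2, hd (k-1) (by omega)] at h1
    have : k - 1 + 1 = k := by omega
    rwa [this] at h1
  obtain ⟨F', hsym⟩ := key n Λ hpos hgcd1 htel'
  set S := AddSubmonoid.closure {x : ℕ | ∃ i ≤ n, x = Λ i} with hSdef
  have hF' : IsGreatest {x : ℤ | x < 0 ∨ x.toNat ∉ S} F' := by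
    constructor
    · have h2 : ¬ (0 ≤ F' ∧ F'.toNat ∈ S) := by
        intro hc
        have h3 := (hsym F').mp hc
        apply h3
        refine ⟨by omega, ?_⟩
        have h4 : (F' - F').toNat = 0 := by omega
        rw [h4]; exact zero_mem S
      simp only [Set.mem_setOf_eq]
      by_contra hc
      push_neg at hc
      exact h2 ⟨by omega, hc.2⟩
    · intro y hy
      by_contra hc
      push_neg at hc
      have hyP : 0 ≤ y ∧ y.toNat ∈ S := by
        rw [hsym y]
        intro hcc
        omega
      simp only [Set.mem_setOf_eq] at hy
      rcases hy with h | h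
      · omega
      · exact h hyP.2
  have hFF : F = F' := hF.unique hF'
  subst hFF
  exact hsym
end

section
/- Let k be a field, V a finite-dimensional k-vector space with a filtration given by a function v : V \ {0} → ℕ (a 'valuation') such that for each value m, the set {x ∈ V : x = 0 or v(x) ≤ m} is a subspace, and distinct one-dimensional 'graded pieces'. Suppose a group G acts k-linearly on V such that v(σ(x) - x) < v(x) for all σ ∈ G and x with σ(x) ≠ x (strictly decreasing filtration action). If V = W₁ ⊕ W₂ is a G-invariant decomposition with both W₁, W₂ nonzero, then both W₁ and W₂ contain a nonzero G-invariant vector. -/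
lemma stmt_6_aux (k : Type*) [Field k] (V : Type*) [AddCommGroup V] [Module k V]
    (G : Type*) [Group G] (ρ : Representation k G V) (v : V → ℕ)
    (hdec : ∀ (σ : G) (x : V), ρ σ x ≠ x → v (ρ σ x - x) < v x)
    (W : Submodule k V) (hW : ∀ (σ : G), ∀ x ∈ W, ρ σ x ∈ W)
    (hne : W ≠ ⊥) : ∃ x ∈ W, x ≠ 0 ∧ ∀ σ : G, ρ σ x = x := by
  obtain ⟨x0, hx0W, hx0⟩ := Submodule.exists_mem_ne_zero_of_ne_bot hne
  set S : Set ℕ := {n | ∃ x ∈ W, x ≠ 0 ∧ v x = n} with hS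
  have hSne : S.Nonempty := ⟨v x0, x0, hx0W, hx0, rfl⟩
  obtain ⟨x, hxW, hx, hvx⟩ := Nat.sInf_mem hSne
  refine ⟨x, hxW, hx, fun σ => ?_⟩
  by_contra h
  have hy : ρ σ x - x ≠ 0 := sub_ne_zero.mpr h
  have hyW : ρ σ x - x ∈ W := W.sub_mem (hW σ x hxW) hxW
  have : v (ρ σ x - x) ∈ S := ⟨_, hyW, hy, rfl⟩
  have := Nat.sInf_le this
  have hlt := hdec σ x h
  omega

/-- If a group acts linearly on a filtered finite-dimensional vector space, strictly
decreasing the valuation of `σ(x) - x`, then each summand of a `G`-invariant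
direct sum decomposition `V = W₁ ⊕ W₂` with both parts nonzero contains a nonzero
`G`-invariant vector. -/
theorem stmt_6 (k : Type*) [Field k] (V : Type*) [AddCommGroup V] [Module k V]
    [FiniteDimensional k V] (G : Type*) [Group G]
    (ρ : Representation k G V)
    (v : V → ℕ)
    (hsub : ∀ m : ℕ, ∃ U : Submodule k V, ∀ x : V, x ∈ U ↔ (x = 0 ∨ v x ≤ m))
    (hdec : ∀ (σ : G) (x : V), ρ σ x ≠ x → v (ρ σ x - x) < v x)
    (W₁ W₂ : Submodule k V)
    (hW₁ : ∀ (σ : G), ∀ x ∈ W₁, ρ σ x ∈ W₁)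
    (hW₂ : ∀ (σ : G), ∀ x ∈ W₂, ρ σ x ∈ W₂)
    (hne₁ : W₁ ≠ ⊥) (hne₂ : W₂ ≠ ⊥)
    (hcompl : IsCompl W₁ W₂) :
    (∃ x ∈ W₁, x ≠ 0 ∧ ∀ σ : G, ρ σ x = x) ∧
    (∃ x ∈ W₂, x ≠ 0 ∧ ∀ σ : G, ρ σ x = x) := by
  exact ⟨stmt_6_aux k V G ρ v hdec W₁ hW₁ hne₁, stmt_6_aux k V G ρ v hdec W₂ hW₂ hne₂⟩
end
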